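/- Define g0(s) = s and g1(s) = (s² + 1)·arccos(1 − 2/(s² + 1)). Then for every s > 0 the Wronskian W(g0, g1)(s) = g0(s)·g1'(s) − g0'(s)·g1(s) equals −2s + (s² − 1)·arccos(1 − 2/(s² + 1)); moreover, for every s > 0 one has −2s + (s² − 1)·arccos(1 − 2/(s² + 1)) < 0, so this Wronskian has no zeros in (0, ∞). -/

import Mathlib

open Real

private lemma arctan_lt_self' {x : ℝ} (hx : 0 < x) : Real.arctan x < x := by
  rcases lt_or_ge x (π / 2) with h | h
  · have h1 := Real.lt_tan hx h
    calc Real.arctan x < Real.arctan (Real.tan x) :=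
          Real.arctan_strictMono h1
      _ = x := Real.arctan_tan (by linarith [Real.pi_pos]) h
  · exact lt_of_lt_of_le (Real.arctan_lt_pi_div_two x) h

private lemma arccos_eq_two_arctan {s : ℝ} (hs : 0 < s) :
    Real.arccos (1 - 2 / (s ^ 2 + 1)) = 2 * Real.arctan (1 / s) := by
  have hden : (0:ℝ) < s ^ 2 + 1 := by positivity
  have hcos : Real.cos (2 * Real.arctan (1 / s)) = 1 - 2 / (s ^ 2 + 1) := by
    rw [Real.cos_two_mul, Real.cos_arctan]
    have h1 : (0:ℝ) < 1 + (1 / s) ^ 2 := by positivity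
    rw [div_pow, one_pow, Real.sq_sqrt h1.le]
    field_simp
    ring
  have hpos : 0 < Real.arctan (1 / s) := by
    have := Real.arctan_strictMono (show (0:ℝ) < 1 / s by positivity)
    simpa using this
  have hlt : Real.arctan (1 / s) < π / 2 := Real.arctan_lt_pi_div_two _
  rw [← hcos, Real.arccos_cos (by linarith) (by linarith)]

private lemma g1_deriv {s : ℝ} (hs : 0 < s) :
    deriv (fun s : ℝ => (s ^ 2 + 1) * Real.arccos (1 - 2 / (s ^ 2 + 1))) s
      = 4 * s * Real.arctan (1 / s) - 2 := by
  have heq : (fun s : ℝ => (s ^ 2 + 1) * Real.arccos (1 - 2 / (s ^ 2 + 1)))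
      =ᶠ[nhds s] fun t : ℝ => (t ^ 2 + 1) * (2 * Real.arctan (1 / t)) := by
    filter_upwards [eventually_gt_nhds hs] with t ht
    rw [arccos_eq_two_arctan ht]
  rw [heq.deriv_eq]
  have hns : s ≠ 0 := hs.ne'
  have h1 : HasDerivAt (fun t : ℝ => t ^ 2 + 1) (2 * s) s := by
    simpa using ((hasDerivAt_pow 2 s).add_const 1)
  have hinv : HasDerivAt (fun t : ℝ => 1 / t) (-(s ^ 2)⁻¹) s := by
    simpa [one_div] using (hasDerivAt_inv hns)
  have h2 : HasDerivAt (fun t : ℝ => Real.arctan (1 / t))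
      ((1 / (1 + (1 / s) ^ 2)) * (-(s ^ 2)⁻¹)) s :=
    (Real.hasDerivAt_arctan (1 / s)).comp s hinv
  have h3 : HasDerivAt (fun t : ℝ => 2 * Real.arctan (1 / t))
      (2 * ((1 / (1 + (1 / s) ^ 2)) * (-(s ^ 2)⁻¹))) s := h2.const_mul 2
  have h4 := h1.mul h3
  rw [HasDerivAt.deriv (f := fun t : ℝ => (t ^ 2 + 1) * (2 * Real.arctan (1 / t))) h4]
  have hden : (0:ℝ) < s ^ 2 + 1 := by positivity
  field_simp
  ring

theorem pair_wronskian_formula_and_sign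
    (g0 g1 : ℝ → ℝ)
    (hg0 : g0 = fun s => s)
    (hg1 : g1 = fun s => (s ^ 2 + 1) * Real.arccos (1 - 2 / (s ^ 2 + 1))) :
    ∀ s : ℝ, 0 < s →
      g0 s * deriv g1 s - deriv g0 s * g1 s =
        -2 * s + (s ^ 2 - 1) * Real.arccos (1 - 2 / (s ^ 2 + 1)) ∧
      -2 * s + (s ^ 2 - 1) * Real.arccos (1 - 2 / (s ^ 2 + 1)) < 0 := by
  subst hg0 hg1
  intro s hs
  have hA := arccos_eq_two_arctan hs
  have hpos : 0 < Real.arctan (1 / s) := by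
    have := Real.arctan_strictMono (show (0:ℝ) < 1 / s by positivity)
    simpa using this
  constructor
  · beta_reduce
    rw [g1_deriv hs, deriv_id'', hA]
    ring
  · rw [hA]
    rcases le_or_gt s 1 with h1 | h1
    · have hsq : s ^ 2 - 1 ≤ 0 := by nlinarith
      have := mul_nonpos_of_nonpos_of_nonneg hsq (by positivity : (0:ℝ) ≤ 2 * Real.arctan (1 / s))
      linarith
    · have hlt : Real.arctan (1 / s) < 1 / s := arctan_lt_self' (by positivity)
      have h2 : s * Real.arctan (1 / s) < 1 := by
        have := (mul_lt_mul_of_pos_left hlt hs)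
        simpa [hs.ne'] using this
      nlinarith
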